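/- For C = 2^p * n + 2^(p-1) - 1 with p ≥ 1, applying p-1 general cycles followed by one final halving (the full 'cascade') transforms C into 3^(p-1) * n + (3^(p-1) - 1)/2. -/
import Mathlib


def oddCycle (x : ℕ) : ℕ := (3 * x + 1) / 2

lemma cascade_aux : ∀ (k n : ℕ),
    oddCycle^[k] (2 ^ (k + 1) * n + 2 ^ k - 1) = 2 * 3 ^ k * n + 3 ^ k - 1 := by
  intro k
  induction k with
  | zero => intro n; simp
  | succ k ih =>
    intro n
    have h1 : (1:ℕ) ≤ 2 ^ k := Nat.one_le_two_pow
    have hstep : oddCycle (2 ^ (k + 2) * n + 2 ^ (k + 1) - 1)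
        = 2 ^ (k + 1) * (3 * n + 1) + 2 ^ k - 1 := by
      unfold oddCycle
      have e1 : (2:ℕ) ^ (k + 1) = 2 * 2 ^ k := by ring
      have e2 : (2:ℕ) ^ (k + 2) * n = 4 * (2 ^ k * n) := by ring
      have e3 : (2:ℕ) ^ (k + 1) * (3 * n + 1) = 6 * (2 ^ k * n) + 2 * 2 ^ k := by ring
      omega
    rw [Function.iterate_succ_apply, hstep, ih]
    have h3 : (1:ℕ) ≤ 3 ^ k := Nat.one_le_pow _ _ (by norm_num)
    have e4 : 2 * 3 ^ k * (3 * n + 1) = 2 * 3 ^ (k + 1) * n + 2 * 3 ^ k := by ring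
    have e5 : (3:ℕ) ^ (k + 1) = 3 * 3 ^ k := by ring
    omega

theorem cascade_transform (p n : ℕ) (hp : 1 ≤ p) :
    (oddCycle^[p - 1] (2 ^ p * n + 2 ^ (p - 1) - 1)) / 2 =
      3 ^ (p - 1) * n + (3 ^ (p - 1) - 1) / 2 := by
  obtain ⟨k, rfl⟩ : ∃ k, p = k + 1 := ⟨p - 1, by omega⟩
  simp only [Nat.add_sub_cancel]
  rw [cascade_aux k n]
  have h3 : (1:ℕ) ≤ 3 ^ k := Nat.one_le_pow _ _ (by norm_num)
  have hodd : Odd ((3:ℕ) ^ k) := Odd.pow ⟨1, by norm_num⟩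
  obtain ⟨m, hm⟩ := hodd
  have hb : 2 * 3 ^ k * n = 2 * (3 ^ k * n) := by ring
  omega
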